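/- Let k ≥ 2. If θ > θ_cr(k) = ((k−1)·k^k/2^k)^(1/(k+1)), then the equation θ^(k+1) = η(x) has no positive solution x, where η(x) = ((∑_{i=1}^{k−1} x^i)·(∑_{i=0}^{k−1} x^i)^k)/((x^k+1)^k). -/

import Mathlib

open Finset

lemma pair_le (x : ℝ) (hx : 0 < x) {i n : ℕ} (h : i ≤ n) :
    x ^ i + x ^ (n - i) ≤ x ^ n + 1 := by
  have hmul : x ^ i * x ^ (n - i) = x ^ n := by
    rw [← pow_add]; congr 1; omega
  rcases le_total x 1 with h1 | h1
  · have hi : x ^ i ≤ 1 := pow_le_one₀ hx.le h1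
    have hj : x ^ (n - i) ≤ 1 := pow_le_one₀ hx.le h1
    nlinarith [mul_nonneg (sub_nonneg.2 hi) (sub_nonneg.2 hj)]
  · have hi : 1 ≤ x ^ i := one_le_pow₀ h1
    have hj : 1 ≤ x ^ (n - i) := one_le_pow₀ h1
    nlinarith [mul_nonneg (sub_nonneg.2 hi) (sub_nonneg.2 hj)]

lemma holderC (x : ℝ) (hx : 0 < x) : ∀ j : ℕ, (x ^ j + 1) ^ (j + 1) ≤ 2 * (x ^ (j + 1) + 1) ^ j
  | 0 => by norm_num
  | (j + 1) => by
    have IH := holderC x hx j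
    have hb : (0:ℝ) < x ^ (j + 1) + 1 := by positivity
    have hlc : (x ^ (j + 1) + 1) ^ 2 ≤ (x ^ j + 1) * (x ^ (j + 2) + 1) := by
      rw [show x ^ (j + 1) = x ^ j * x from by ring, show x ^ (j + 2) = x ^ j * x ^ 2 from by ring]
      nlinarith [mul_nonneg (pow_nonneg hx.le j) (sq_nonneg (x - 1))]
    have step : (x ^ (j + 1) + 1) ^ (2 * (j + 1)) ≤ (x ^ j + 1) ^ (j + 1) * (x ^ (j + 2) + 1) ^ (j + 1) := by
      calc (x ^ (j + 1) + 1) ^ (2 * (j + 1)) = ((x ^ (j + 1) + 1) ^ 2) ^ (j + 1) := by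
            rw [← pow_mul]
        _ ≤ ((x ^ j + 1) * (x ^ (j + 2) + 1)) ^ (j + 1) :=
            pow_le_pow_left₀ (by positivity) hlc _
        _ = _ := mul_pow _ _ _
    have step2 : (x ^ (j + 1) + 1) ^ j * (x ^ (j + 1) + 1) ^ (j + 2) ≤
        (x ^ (j + 1) + 1) ^ j * (2 * (x ^ (j + 2) + 1) ^ (j + 1)) := by
      have h2 : (x ^ j + 1) ^ (j + 1) * (x ^ (j + 2) + 1) ^ (j + 1) ≤
          (2 * (x ^ (j + 1) + 1) ^ j) * (x ^ (j + 2) + 1) ^ (j + 1) :=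
        mul_le_mul_of_nonneg_right IH (by positivity)
      have hpow : (x ^ (j + 1) + 1) ^ (2 * (j + 1)) =
          (x ^ (j + 1) + 1) ^ j * (x ^ (j + 1) + 1) ^ (j + 2) := by
        rw [← pow_add]; congr 1; omega
      calc (x ^ (j + 1) + 1) ^ j * (x ^ (j + 1) + 1) ^ (j + 2)
          = (x ^ (j + 1) + 1) ^ (2 * (j + 1)) := hpow.symm
        _ ≤ (x ^ j + 1) ^ (j + 1) * (x ^ (j + 2) + 1) ^ (j + 1) := step
        _ ≤ (2 * (x ^ (j + 1) + 1) ^ j) * (x ^ (j + 2) + 1) ^ (j + 1) := h2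
        _ = (x ^ (j + 1) + 1) ^ j * (2 * (x ^ (j + 2) + 1) ^ (j + 1)) := by ring
    have := le_of_mul_le_mul_left step2 (pow_pos hb j)
    calc (x ^ (j + 1) + 1) ^ (j + 1 + 1) = (x ^ (j + 1) + 1) ^ (j + 2) := by norm_num
      _ ≤ 2 * (x ^ (j + 2) + 1) ^ (j + 1) := this
      _ = 2 * (x ^ (j + 1 + 1) + 1) ^ (j + 1) := by norm_num

lemma sumA (x : ℝ) (hx : 0 < x) (k : ℕ) :
    2 * ∑ i ∈ Finset.range k, x ^ i ≤ (k : ℝ) * (x ^ (k - 1) + 1) := by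
  have hrefl : ∑ i ∈ Finset.range k, x ^ (k - 1 - i) = ∑ i ∈ Finset.range k, x ^ i :=
    Finset.sum_range_reflect (fun i => x ^ i) k
  calc 2 * ∑ i ∈ Finset.range k, x ^ i
      = ∑ i ∈ Finset.range k, (x ^ i + x ^ (k - 1 - i)) := by
        rw [Finset.sum_add_distrib, hrefl]; ring
    _ ≤ ∑ _i ∈ Finset.range k, (x ^ (k - 1) + 1) := by
        refine Finset.sum_le_sum fun i hi => ?_
        have : i ≤ k - 1 := by
          have := Finset.mem_range.1 hi; omega
        exact pair_le x hx this
    _ = (k : ℝ) * (x ^ (k - 1) + 1) := by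
        rw [Finset.sum_const, Finset.card_range, nsmul_eq_mul]

lemma sumB (x : ℝ) (hx : 0 < x) (k : ℕ) (hk : 2 ≤ k) :
    2 * ∑ i ∈ Finset.Icc 1 (k - 1), x ^ i ≤ ((k : ℝ) - 1) * (x ^ k + 1) := by
  have hIcc : ∑ i ∈ Finset.Icc 1 (k - 1), x ^ i = ∑ i ∈ Finset.range (k - 1), x ^ (1 + i) := by
    have hset : Finset.Icc 1 (k - 1) = Finset.Ico 1 k := by
      rw [← Finset.Ico_add_one_right_eq_Icc]
      congr 1
      omega
    rw [hset, Finset.sum_Ico_eq_sum_range]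
  have hrefl : ∑ i ∈ Finset.range (k - 1), x ^ (1 + (k - 1 - 1 - i)) =
      ∑ i ∈ Finset.range (k - 1), x ^ (1 + i) :=
    Finset.sum_range_reflect (fun i => x ^ (1 + i)) (k - 1)
  have key : 2 * ∑ i ∈ Finset.range (k - 1), x ^ (1 + i) ≤ ((k : ℝ) - 1) * (x ^ k + 1) := by
    calc 2 * ∑ i ∈ Finset.range (k - 1), x ^ (1 + i)
        = ∑ i ∈ Finset.range (k - 1), (x ^ (1 + i) + x ^ (1 + (k - 1 - 1 - i))) := by
          rw [Finset.sum_add_distrib, hrefl]; ring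
      _ ≤ ∑ _i ∈ Finset.range (k - 1), (x ^ k + 1) := by
          refine Finset.sum_le_sum fun i hi => ?_
          have hi' : i < k - 1 := Finset.mem_range.1 hi
          have h1 : 1 + (k - 1 - 1 - i) = k - (1 + i) := by omega
          have h2 : 1 + i ≤ k := by omega
          rw [h1]
          exact pair_le x hx h2
      _ = ((k : ℝ) - 1) * (x ^ k + 1) := by
          rw [Finset.sum_const, Finset.card_range, nsmul_eq_mul]
          congr 1
          have : ((k - 1 : ℕ) : ℝ) = (k : ℝ) - 1 := by
            have : 1 ≤ k := by omega
            push_cast [this]; ring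
          rw [this]
  rw [hIcc]; exact key

theorem stmt_7 (k : ℕ) (hk : 2 ≤ k) (θ : ℝ) (hθ : 0 < θ)
    (hgt : θ > (((k : ℝ) - 1) * (k : ℝ) ^ k / 2 ^ k) ^ ((1 : ℝ) / (k + 1))) :
    ¬∃ x : ℝ, 0 < x ∧
      θ ^ (k + 1) =
        (∑ i ∈ Finset.Icc 1 (k - 1), x ^ i) * (∑ i ∈ Finset.range k, x ^ i) ^ k /
          (x ^ k + 1) ^ k := by
  rintro ⟨x, hx, heq⟩
  set c : ℝ := ((k : ℝ) - 1) * (k : ℝ) ^ k / 2 ^ k with hcdef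
  have hkR : (2:ℝ) ≤ (k:ℝ) := by exact_mod_cast hk
  have hk1R : (0:ℝ) ≤ (k:ℝ) - 1 := by linarith
  have hc : 0 ≤ c := by
    apply div_nonneg (mul_nonneg hk1R (by positivity)) (by positivity)
  -- θ ^ (k+1) > c
  have hθpow : c < θ ^ (k + 1) := by
    have h0 : (0:ℝ) ≤ c ^ ((1:ℝ)/(k+1)) := Real.rpow_nonneg hc _
    have h1 : (c ^ ((1:ℝ)/(k+1))) ^ (k+1) < θ ^ (k+1) :=
      pow_lt_pow_left₀ hgt h0 (by omega)
    have h2 : (c ^ ((1:ℝ)/(k+1))) ^ (k+1) = c := by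
      have hne : ((k:ℝ) + 1) ≠ 0 := by positivity
      rw [← Real.rpow_natCast (c ^ ((1:ℝ)/(k+1))) (k+1), ← Real.rpow_mul hc]
      rw [show (1:ℝ)/((k:ℝ)+1) * ((k+1 : ℕ) : ℝ) = 1 by push_cast; field_simp]
      exact Real.rpow_one c
    linarith
  -- bound on η(x)
  set S1 : ℝ := ∑ i ∈ Finset.Icc 1 (k - 1), x ^ i with hS1def
  set S0 : ℝ := ∑ i ∈ Finset.range k, x ^ i with hS0def
  have hS1 : 0 ≤ S1 := Finset.sum_nonneg fun i _ => by positivity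
  have hS0 : 0 ≤ S0 := Finset.sum_nonneg fun i _ => by positivity
  have hA : S0 ≤ (k:ℝ) * (x ^ (k - 1) + 1) / 2 := by
    have := sumA x hx k; linarith
  have hB : S1 ≤ ((k:ℝ) - 1) * (x ^ k + 1) / 2 := by
    have := sumB x hx k hk; linarith
  have hC : (x ^ (k - 1) + 1) ^ k ≤ 2 * (x ^ k + 1) ^ (k - 1) := by
    have h := holderC x hx (k - 1)
    have e1 : k - 1 + 1 = k := by omega
    rw [e1] at h
    exact h
  have hD : (0:ℝ) < (x ^ k + 1) ^ k := by positivity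
  have key : S1 * S0 ^ k ≤ c * (x ^ k + 1) ^ k := by
    have e0 : (0:ℝ) ≤ (k:ℝ) * (x ^ (k - 1) + 1) / 2 := by positivity
    have e1 : (0:ℝ) ≤ ((k:ℝ) - 1) * (x ^ k + 1) / 2 := by
      apply div_nonneg (mul_nonneg hk1R (by positivity)) (by norm_num)
    calc S1 * S0 ^ k ≤ (((k:ℝ) - 1) * (x ^ k + 1) / 2) * ((k:ℝ) * (x ^ (k - 1) + 1) / 2) ^ k := by
          exact mul_le_mul hB (pow_le_pow_left₀ hS0 hA k) (pow_nonneg hS0 k) e1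
      _ = (((k:ℝ) - 1) * (k:ℝ) ^ k / 2 ^ (k + 1)) * ((x ^ k + 1) * (x ^ (k - 1) + 1) ^ k) := by
          rw [div_pow, mul_pow]; ring
      _ ≤ (((k:ℝ) - 1) * (k:ℝ) ^ k / 2 ^ (k + 1)) * ((x ^ k + 1) * (2 * (x ^ k + 1) ^ (k - 1))) := by
          have hpre : (0:ℝ) ≤ ((k:ℝ) - 1) * (k:ℝ) ^ k / 2 ^ (k + 1) :=
            div_nonneg (mul_nonneg hk1R (by positivity)) (by positivity)
          exact mul_le_mul_of_nonneg_left
            (mul_le_mul_of_nonneg_left hC (by positivity)) hpre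
      _ = c * (x ^ k + 1) ^ k := by
          have h3 : (x ^ k + 1) ^ (k - 1) * (x ^ k + 1) = (x ^ k + 1) ^ k := by
            rw [← pow_succ]; congr 1; omega
          rw [hcdef, ← h3]; ring
  have hfrac : S1 * S0 ^ k / (x ^ k + 1) ^ k ≤ c := by
    rw [div_le_iff₀ hD]; linarith
  rw [heq] at hθpow
  linarith
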